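/- Let $A$ be the free associative $\mathbb{F}_2$-algebra on generators $z_1, z_2, z_3, \ldots$ (one generator for each positive integer). An element $a \in A$ satisfies $a z_1 = z_1 a$ if and only if $a$ lies in the $\mathbb{F}_2$-subalgebra of $A$ generated by $z_1$. In other words, the centralizer of the generator $z_1$ in $A$ consists exactly of the polynomials in $z_1$ with $\mathbb{F}_2$-coefficients. -/

import Mathlib

open MonoidAlgebra

namespace CentralizerAux

noncomputable def e : FreeAlgebra (ZMod 2) ℕ+ ≃ₐ[ZMod 2] MonoidAlgebra (ZMod 2) (FreeMonoid ℕ+) :=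
  FreeAlgebra.equivMonoidAlgebraFreeMonoid

abbrev σ : FreeMonoid ℕ+ := FreeMonoid.of 1

lemma e_ι : e (FreeAlgebra.ι (ZMod 2) (1:ℕ+)) = single σ 1 := by
  simp [e, FreeAlgebra.equivMonoidAlgebraFreeMonoid, FreeAlgebra.lift_ι_apply,
    MonoidAlgebra.of_apply]

lemma pow_sigma (n : ℕ) : (σ ^ n) = FreeMonoid.ofList (List.replicate n 1) := by
  induction n with
  | zero => rfl
  | succ n ih =>
    rw [pow_succ, ih, List.replicate_succ']
    rfl

end CentralizerAux

namespace Test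
open CentralizerAux FreeMonoid

variable (f : MonoidAlgebra (ZMod 2) (FreeMonoid ℕ+))
  (hf : f * single σ 1 = single σ 1 * f)

include hf in
lemma relA (w : FreeMonoid ℕ+) (h : ¬ ∃ d, w * σ = σ * d) : f.coeff w = 0 := by
  have h1 := coeff_mul_single_eq_coeff_mul (r := (1 : ZMod 2)) (m := σ) (m₁ := w * σ) (x := f) w
    (fun a _ => mul_left_inj σ)
  rw [hf, single_mul_apply_of_not_exists_mul 1 f h] at h1
  simpa using h1.symm

include hf in
lemma relB (w : FreeMonoid ℕ+) (h : ¬ ∃ d, σ * w = d * σ) : f.coeff w = 0 := by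
  have h1 := coeff_single_mul_eq_mul_coeff (r := (1 : ZMod 2)) (m := σ) (m₁ := σ * w) (x := f) w
    (fun a _ => mul_right_inj σ)
  rw [← hf, mul_single_apply_of_not_exists_mul 1 f h] at h1
  simpa using h1.symm

include hf in
lemma relC (w : FreeMonoid ℕ+) : f.coeff (σ * w) = f.coeff (w * σ) := by
  have hL := coeff_single_mul_eq_mul_coeff (r := (1 : ZMod 2)) (m := σ) (m₁ := σ * (w * σ)) (x := f) (w * σ)
    (fun a _ => mul_right_inj σ)
  have hR := coeff_mul_single_eq_coeff_mul (r := (1 : ZMod 2)) (m := σ) (m₁ := σ * w * σ) (x := f) (σ * w)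
    (fun a _ => mul_left_inj σ)
  rw [hf, mul_assoc, hL] at hR
  simpa using hR.symm


lemma decomp (l : List ℕ+) : (∃ n, l = List.replicate n 1) ∨
    ∃ u k, l = u ++ List.replicate k 1 ∧ u ≠ [] ∧ u.getLast? ≠ some 1 := by
  induction l using List.reverseRecOn with
  | nil => exact Or.inl ⟨0, rfl⟩
  | append_singleton l a ih =>
    by_cases ha : a = 1
    · subst ha
      rcases ih with ⟨n, rfl⟩ | ⟨u, k, rfl, hu, hlast⟩
      · exact Or.inl ⟨n + 1, by rw [List.replicate_succ']⟩
      · exact Or.inr ⟨u, k + 1, by rw [List.replicate_succ', List.append_assoc], hu, hlast⟩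
    · exact Or.inr ⟨l ++ [a], 0, by simp, by simp,
        by rw [List.getLast?_concat]; simpa using ha⟩

include hf in
lemma key : ∀ (k : ℕ) (u : List ℕ+), u ≠ [] → u.getLast? ≠ some 1 →
    f.coeff (FreeMonoid.ofList (u ++ List.replicate k 1)) = 0 := by
  intro k
  induction k with
  | zero =>
    intro u hu hlast
    rw [List.replicate_zero, List.append_nil]
    apply relB f hf
    rintro ⟨d, hd⟩
    have h3 := congrArg (List.getLast? ∘ FreeMonoid.toList) hd
    simp only [Function.comp_apply, FreeMonoid.toList_mul, FreeMonoid.toList_of,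
      FreeMonoid.toList_ofList] at h3
    rw [List.getLast?_concat, show ([(1:ℕ+)] ++ u) = [1] ++ u from rfl,
      List.getLast?_append_of_ne_nil _ hu] at h3
    exact hlast h3
  | succ k ih =>
    intro u hu hlast
    have h0 : u ++ List.replicate (k + 1) 1 = (u ++ List.replicate k 1) ++ [1] := by
      rw [List.replicate_succ', ← List.append_assoc]
    rw [h0]
    have h1 : FreeMonoid.ofList ((u ++ List.replicate k 1) ++ [(1:ℕ+)]) =
        FreeMonoid.ofList (u ++ List.replicate k 1) * σ := rfl
    rw [h1, ← relC f hf]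
    have h2 : σ * FreeMonoid.ofList (u ++ List.replicate k 1) =
        FreeMonoid.ofList (((1:ℕ+) :: u) ++ List.replicate k 1) := rfl
    rw [h2]
    apply ih
    · simp
    · rw [show ((1:ℕ+) :: u) = [1] ++ u from rfl, List.getLast?_append_of_ne_nil _ hu]
      exact hlast

include hf in
lemma main (w : FreeMonoid ℕ+) (hw : ∀ n : ℕ, w ≠ σ ^ n) : f.coeff w = 0 := by
  rcases decomp (FreeMonoid.toList w) with ⟨n, hn⟩ | ⟨u, k, h1, h2, h3⟩
  · refine absurd ?_ (hw n)
    rw [pow_sigma, ← hn, FreeMonoid.ofList_toList]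
  · have hw2 : w = FreeMonoid.ofList (u ++ List.replicate k 1) := by
      rw [← h1, FreeMonoid.ofList_toList]
    rw [hw2]
    exact key f hf k u h2 h3

end Test

open CentralizerAux

/-- **Centralizer of a generator in a free associative algebra.**
Let `A` be the free associative `𝔽₂`-algebra on generators `z₁, z₂, z₃, …`
(indexed by the positive natural numbers).  An element `a` commutes with the
generator `z₁` if and only if `a` lies in the `𝔽₂`-subalgebra of `A` generated
by `z₁`, i.e. the centralizer of `z₁` consists exactly of polynomials in `z₁`. -/
theorem centralizer_of_generator_in_free_algebra
    (a : FreeAlgebra (ZMod 2) ℕ+) :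
    a * FreeAlgebra.ι (ZMod 2) (1 : ℕ+) = FreeAlgebra.ι (ZMod 2) (1 : ℕ+) * a ↔
      a ∈ Algebra.adjoin (ZMod 2)
        ({FreeAlgebra.ι (ZMod 2) (1 : ℕ+)} : Set (FreeAlgebra (ZMod 2) ℕ+)) := by

  classical
  constructor
  · intro h
    set f := e a with hfdef
    have hf : f * single σ 1 = single σ 1 * f := by
      have h2 := congrArg e h
      rw [map_mul, map_mul, e_ι] at h2
      exact h2
    have ha : a = e.symm f := (e.symm_apply_apply a).symm
    rw [ha, ← sum_coeff_single f, map_finsuppSum]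
    rw [Finsupp.sum]
    apply sum_mem
    intro g hg
    obtain ⟨n, rfl⟩ : ∃ n : ℕ, g = σ ^ n := by
      by_contra hc
      push_neg at hc
      exact Finsupp.mem_support_iff.mp hg (Test.main f hf g hc)
    have hs : (MonoidAlgebra.single (σ ^ n) (f.coeff (σ ^ n)) :
        MonoidAlgebra (ZMod 2) (FreeMonoid ℕ+)) = f.coeff (σ ^ n) • (single σ 1) ^ n := by
      rw [MonoidAlgebra.single_pow, MonoidAlgebra.smul_single', one_pow, mul_one]
    show e.symm (MonoidAlgebra.single (σ ^ n) (f.coeff (σ ^ n))) ∈ _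
    have hz : e.symm (single σ 1) = FreeAlgebra.ι (ZMod 2) (1 : ℕ+) := by
      rw [← e_ι, AlgEquiv.symm_apply_apply]
    rw [hs, map_smul, show e.symm ((single σ 1) ^ n) = (e.symm (single σ 1)) ^ n from
      map_pow _ _ _, hz]
    refine Subalgebra.smul_mem _ ?_ _
    exact pow_mem (Algebra.self_mem_adjoin_singleton _ _) n
  · intro h
    exact (Algebra.commute_of_mem_adjoin_self h).eq.symm
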